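/- Let T > 0, β > 0, let α be a probability measure on the interval [−T, 0], and let y : ℝ → ℝ be a measurable function which is bounded on [0, T] and satisfies y(t) = y(0) for t < 0. Then ∫₀ᵀ e^{βt} (∫_{[−T,0]} |y(t+u)|² α(du)) dt ≤ (∫_{[−T,0]} e^{−βu} α(du)) · T · sup_{v ∈ [0,T]} e^{βv} |y(v)|². -/

import Mathlib

open MeasureTheory

/-- For `T > 0`, `β > 0`, a probability measure `α` on `[-T, 0]`, and a
measurable function `y : ℝ → ℝ` bounded on `[0, T]` with `y(t) = y(0)` for `t < 0`,
`∫₀ᵀ e^{βt} (∫_{[-T,0]} |y(t+u)|² α(du)) dt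
  ≤ (∫_{[-T,0]} e^{-βu} α(du)) · T · sup_{v ∈ [0,T]} e^{βv} |y(v)|²`. -/
theorem delay_estimate_sup
    (T β : ℝ) (hT : 0 < T) (hβ : 0 < β)
    (α : Measure ℝ) [IsProbabilityMeasure α] (hα : α (Set.Icc (-T) 0) = 1)
    (y : ℝ → ℝ) (hy : Measurable y)
    (hybdd : ∃ C, ∀ v ∈ Set.Icc (0 : ℝ) T, |y v| ≤ C)
    (hy0 : ∀ t < 0, y t = y 0) :
    ∫ t in Set.Icc 0 T, Real.exp (β * t) * (∫ u, |y (t + u)| ^ 2 ∂α)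
      ≤ (∫ u, Real.exp (-β * u) ∂α) * T *
        ⨆ v : Set.Icc (0 : ℝ) T, Real.exp (β * (v : ℝ)) * |y (v : ℝ)| ^ 2 := by
  obtain ⟨C, hC⟩ := hybdd
  set S := ⨆ v : Set.Icc (0 : ℝ) T, Real.exp (β * (v : ℝ)) * |y (v : ℝ)| ^ 2 with hSdef
  set I := ∫ u, Real.exp (-β * u) ∂α with hIdef
  have h0mem : (0 : ℝ) ∈ Set.Icc (0 : ℝ) T := ⟨le_refl 0, le_of_lt hT⟩
  haveI hne : Nonempty (Set.Icc (0 : ℝ) T) := ⟨⟨0, h0mem⟩⟩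
  have hbdd : BddAbove (Set.range fun v : Set.Icc (0 : ℝ) T =>
      Real.exp (β * (v : ℝ)) * |y (v : ℝ)| ^ 2) := by
    refine ⟨Real.exp (β * T) * C ^ 2, ?_⟩
    rintro x ⟨v, rfl⟩
    have h1 : Real.exp (β * (v : ℝ)) ≤ Real.exp (β * T) :=
      Real.exp_le_exp.2 (by nlinarith [v.2.1, v.2.2])
    have h2 : |y (v : ℝ)| ^ 2 ≤ C ^ 2 := by
      have := hC v v.2
      nlinarith [abs_nonneg (y (v : ℝ))]
    exact mul_le_mul h1 h2 (by positivity) (Real.exp_pos _).le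
  have hle : ∀ v : Set.Icc (0 : ℝ) T,
      Real.exp (β * (v : ℝ)) * |y (v : ℝ)| ^ 2 ≤ S := fun v => le_ciSup hbdd v
  -- key pointwise estimate
  have key : ∀ t ∈ Set.Icc (0 : ℝ) T, ∀ u ∈ Set.Icc (-T) (0 : ℝ),
      Real.exp (β * t) * |y (t + u)| ^ 2 ≤ S * Real.exp (-β * u) := by
    intro t ht u hu
    by_cases h : t + u < 0
    · have hy' : y (t + u) = y 0 := hy0 _ h
      have hS0 : |y 0| ^ 2 ≤ S := by
        have := hle ⟨0, h0mem⟩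
        simpa using this
      have hexp : Real.exp (β * t) ≤ Real.exp (-β * u) :=
        Real.exp_le_exp.2 (by nlinarith)
      rw [hy']
      nlinarith [Real.exp_pos (β * t), Real.exp_pos (-β * u), sq_nonneg (|y 0|)]
    · push_neg at h
      have hmem : t + u ∈ Set.Icc (0 : ℝ) T := ⟨h, by linarith [ht.2, hu.2]⟩
      have hS1 : Real.exp (β * (t + u)) * |y (t + u)| ^ 2 ≤ S := hle ⟨t + u, hmem⟩
      have hsplit : Real.exp (β * t) = Real.exp (-β * u) * Real.exp (β * (t + u)) := by
        rw [← Real.exp_add]; ring_nf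
      rw [hsplit]
      calc Real.exp (-β * u) * Real.exp (β * (t + u)) * |y (t + u)| ^ 2
          = Real.exp (-β * u) * (Real.exp (β * (t + u)) * |y (t + u)| ^ 2) := by ring
        _ ≤ Real.exp (-β * u) * S :=
            mul_le_mul_of_nonneg_left hS1 (Real.exp_pos _).le
        _ = S * Real.exp (-β * u) := by ring
  have hαc : ∀ᵐ u ∂α, u ∈ Set.Icc (-T) (0 : ℝ) := by
    rw [ae_iff]
    have : α (Set.Icc (-T) (0 : ℝ))ᶜ = 0 := by
      rw [measure_compl measurableSet_Icc (measure_ne_top α _), hα, measure_univ,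
        tsub_self]
    exact measure_mono_null (fun a ha => ha) this
  have hInt : Integrable (fun u => Real.exp (-β * u)) α := by
    refine Integrable.mono' (integrable_const (Real.exp (β * T))) ?_ ?_
    · exact (Real.measurable_exp.comp (measurable_const.mul measurable_id)).aestronglyMeasurable
    · filter_upwards [hαc] with u hu
      rw [Real.norm_eq_abs, abs_of_pos (Real.exp_pos _)]
      exact Real.exp_le_exp.2 (by nlinarith [hu.1])
  -- inner estimate: for each t in [0,T]
  have inner : ∀ t ∈ Set.Icc (0 : ℝ) T,
      Real.exp (β * t) * (∫ u, |y (t + u)| ^ 2 ∂α) ≤ S * I := by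
    intro t ht
    rw [← integral_const_mul, hIdef]
    refine le_trans (integral_mono_of_nonneg
      (f := fun u => Real.exp (β * t) * |y (t + u)| ^ 2)
      (g := fun u => S * Real.exp (-β * u)) (μ := α)
      (Filter.Eventually.of_forall fun u => by positivity)
      (hInt.const_mul S)
      (by filter_upwards [hαc] with u hu; exact key t ht u hu))
      (le_of_eq (integral_const_mul S _))
  have hSnonneg : 0 ≤ S := le_trans (by positivity) (hle ⟨0, h0mem⟩)
  have hInonneg : 0 ≤ I := integral_nonneg fun u => (Real.exp_pos _).le
  have houter : ∫ t in Set.Icc 0 T, Real.exp (β * t) * (∫ u, |y (t + u)| ^ 2 ∂α)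
      ≤ ∫ _t in Set.Icc (0 : ℝ) T, S * I := by
    refine integral_mono_of_nonneg ?_ ?_ ?_
    · exact Filter.Eventually.of_forall fun t => by
        have : 0 ≤ ∫ u, |y (t + u)| ^ 2 ∂α := integral_nonneg fun u => by positivity
        positivity
    · exact integrableOn_const (by
        rw [Real.volume_Icc]; exact ENNReal.ofReal_ne_top)
    · filter_upwards [ae_restrict_mem measurableSet_Icc] with t ht
      exact inner t ht
  have hconst : ∫ _t in Set.Icc (0 : ℝ) T, S * I = T * (S * I) := by
    rw [setIntegral_const, Real.volume_real_Icc_of_le (by linarith)]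
    rw [smul_eq_mul]
    ring
  calc ∫ t in Set.Icc 0 T, Real.exp (β * t) * (∫ u, |y (t + u)| ^ 2 ∂α)
      ≤ ∫ _t in Set.Icc (0 : ℝ) T, S * I := houter
    _ = T * (S * I) := hconst
    _ = I * T * S := by ring
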